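/- Let α and β be roots of F, with distinguished elements ϱ_α, ϱ_β ∈ F respectively, and suppose α + β ≠ 0. If ϱ_α(β) < 0, then ϱ_β(α) = 0. (For an Enriques B⁻-system (𝔛, 𝓕, ρ), applied with F = 𝓕¹ and α, β two distinct simple roots lying in 𝔛 with ρ(α), ρ(β) ≠ 0, this yields: if ⟨ρ(α), β⟩ < 0 then ⟨ρ(β), α⟩ = 0.) -/

import Mathlib

/-- Let `M` be a finitely generated free ℤ-module and `F` a finite set of
ℤ-linear functionals on `M` such that every ℚ-valued functional on `M` is a nonnegative
rational combination of the elements of `F`.  If `α` and `β` are roots of `F` with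
distinguished elements `ϱα`, `ϱβ`, `α + β ≠ 0`, and `ϱα β < 0`, then `ϱβ α = 0`. -/
theorem root_pair_orthogonality
    {M : Type*} [AddCommGroup M] [Module.Free ℤ M] [Module.Finite ℤ M]
    (F : Finset (M →ₗ[ℤ] ℤ))
    (hspan : ∀ φ : M →ₗ[ℤ] ℚ, ∃ c : (M →ₗ[ℤ] ℤ) → ℚ,
        (∀ ϱ, 0 ≤ c ϱ) ∧ ∀ x : M, φ x = ∑ ϱ ∈ F, c ϱ * (ϱ x : ℚ))
    (α β : M) (ϱα ϱβ : M →ₗ[ℤ] ℤ)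
    (hϱα : ϱα ∈ F) (hα1 : ϱα α = 1) (hα2 : ∀ ϱ ∈ F, ϱ ≠ ϱα → ϱ α ≤ 0)
    (hϱβ : ϱβ ∈ F) (hβ1 : ϱβ β = 1) (hβ2 : ∀ ϱ ∈ F, ϱ ≠ ϱβ → ϱ β ≤ 0)
    (hab : α + β ≠ 0) (h : ϱα β < 0) :
    ϱβ α = 0 := by
  have hne : ϱβ ≠ ϱα := by
    intro e; rw [e] at hβ1; omega
  have hle : ϱβ α ≤ 0 := hα2 ϱβ hϱβ hne
  rcases lt_or_eq_of_le hle with hlt | heq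
  swap
  · exact heq
  exfalso
  -- every ϱ ∈ F is nonpositive on α + β
  have key : ∀ ϱ ∈ F, ϱ (α + β) ≤ 0 := by
    intro ϱ hϱ
    rw [map_add]
    rcases eq_or_ne ϱ ϱα with hA | hA
    · rw [hA]; omega
    rcases eq_or_ne ϱ ϱβ with hB | hB
    · rw [hB]; omega
    · have := hα2 ϱ hϱ hA; have := hβ2 ϱ hϱ hB; omega
  -- hence every ℚ-linear functional is nonpositive on α + β
  have key' : ∀ φ : M →ₗ[ℤ] ℚ, φ (α + β) ≤ 0 := by
    intro φ
    obtain ⟨c, hc, hval⟩ := hspan φ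
    rw [hval]
    apply Finset.sum_nonpos
    intro ϱ hϱ
    have h1 := hc ϱ
    have h2 : ((ϱ (α + β) : ℤ) : ℚ) ≤ 0 := by exact_mod_cast key ϱ hϱ
    exact mul_nonpos_of_nonneg_of_nonpos h1 h2
  -- so every ℚ-linear functional vanishes on α + β, contradicting α + β ≠ 0
  have zero : ∀ φ : M →ₗ[ℤ] ℚ, φ (α + β) = 0 := by
    intro φ
    have h1 := key' φ
    have h2 := key' (-φ)
    simp only [LinearMap.neg_apply, neg_nonpos] at h2
    linarith
  apply hab
  let b := Module.Free.chooseBasis ℤ M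
  apply b.ext_elem_iff.mpr
  intro i
  have := zero (((Int.castAddHom ℚ).toIntLinearMap).comp (b.coord i))
  simp only [LinearMap.comp_apply, AddMonoidHom.coe_toIntLinearMap,
    Int.coe_castAddHom, Int.cast_eq_zero] at this
  simpa [Module.Basis.coord_apply] using this
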